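/- Let n ≥ 1 and let A and B be real n×n matrices. Define the adjoint operator ad_A by ad_A(X) = A·X − X·A. Then the map t ↦ exp(A + t·B) (matrix exponential) is differentiable at t = 0, and its derivative at t = 0 equals exp(A) · Σ_{k=0}^∞ ((−1)^k/(k+1)!) · ad_A^k(B), where the series converges in the space of n×n real matrices. -/

import Mathlib

attribute [local instance] Matrix.normedAddCommGroup Matrix.normedSpace

open Finset

namespace MED

/-! ### Combinatorial identities -/

lemma neg_one_pow_sub {l i : ℕ} (h : l ≤ i) : (-1:ℤ)^(i-l) = (-1)^i * (-1)^l := by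
  have h2 : (-1:ℤ)^(l+l) = 1 := by rw [← two_mul, pow_mul]; norm_num
  calc (-1:ℤ)^(i-l) = (-1)^(i-l) * (-1)^(l+l) := by rw [h2, mul_one]
    _ = (-1)^(i-l+(l+l)) := by rw [pow_add (-1:ℤ) (i-l) (l+l)]
    _ = (-1)^(i+l) := by congr 1; omega
    _ = (-1)^i * (-1)^l := by rw [pow_add]

lemma neg_one_pow_sub_real {l i : ℕ} (h : l ≤ i) : (-1:ℝ)^(i-l) = (-1)^i * (-1)^l := by
  have h2 : (-1:ℝ)^(l+l) = 1 := by rw [← two_mul, pow_mul]; norm_num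
  calc (-1:ℝ)^(i-l) = (-1)^(i-l) * (-1)^(l+l) := by rw [h2, mul_one]
    _ = (-1)^(i-l+(l+l)) := by rw [pow_add (-1:ℝ) (i-l) (l+l)]
    _ = (-1)^(i+l) := by congr 1; omega
    _ = (-1)^i * (-1)^l := by rw [pow_add]

lemma coeff_poly_one_sub_pow (N k : ℕ) :
    ((1 - Polynomial.X : Polynomial ℤ) ^ N).coeff k = (-1)^k * (N.choose k) := by
  have h1 : (1 - Polynomial.X : Polynomial ℤ) = -(Polynomial.X + Polynomial.C (-1)) := by
    rw [map_neg, Polynomial.C_1]; ring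
  rw [h1, neg_pow, show ((-1 : Polynomial ℤ)) = Polynomial.C (-1) by simp, ← map_pow,
    Polynomial.coeff_C_mul, Polynomial.coeff_X_add_C_pow]
  by_cases hk : k ≤ N
  · rw [neg_one_pow_sub hk]
    have h3 : (-1:ℤ)^N * (-1)^N = 1 := by
      rw [← pow_add, ← two_mul, pow_mul]; norm_num
    rw [show (-1:ℤ)^N * ((-1:ℤ)^N * (-1:ℤ)^k * ↑(N.choose k))
        = ((-1:ℤ)^N * (-1:ℤ)^N) * ((-1:ℤ)^k * ↑(N.choose k)) from by ring, h3, one_mul]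
  · rw [Nat.choose_eq_zero_of_lt (by omega)]
    simp

lemma coeff_ps_one_sub_pow (N k : ℕ) :
    (PowerSeries.coeff k) ((1 - PowerSeries.X : PowerSeries ℤ) ^ N)
      = (-1)^k * (N.choose k) := by
  have h2 : (((1 - Polynomial.X : Polynomial ℤ) ^ N : Polynomial ℤ) : PowerSeries ℤ)
      = (1 - PowerSeries.X : PowerSeries ℤ) ^ N := by
    push_cast
    simp
  rw [← h2, Polynomial.coeff_coe, coeff_poly_one_sub_pow]

open PowerSeries in
lemma G_zero (i j : ℕ) (hi : 1 ≤ i) :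
    ∑ l ∈ Finset.range (i+1), (-1:ℤ)^l * ((l+j).choose j) * ((i+j).choose (i-l)) = 0 := by
  have hprod : ((PowerSeries.mk fun m => ((j + m).choose j : ℤ)) : PowerSeries ℤ)
      * (1 - PowerSeries.X) ^ (i + j) = (1 - PowerSeries.X) ^ (i - 1) := by
    have h1 : (1 - PowerSeries.X : PowerSeries ℤ) ^ (i + j)
        = (1 - PowerSeries.X) ^ (j + 1) * (1 - PowerSeries.X) ^ (i - 1) := by
      rw [← pow_add]; congr 1; omega
    rw [h1, ← mul_assoc, ← invOneSubPow_val_succ_eq_mk_add_choose,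
      ← invOneSubPow_inv_eq_one_sub_pow, Units.val_inv, one_mul]
  have hco := congrArg (PowerSeries.coeff i) hprod
  rw [PowerSeries.coeff_mul, Finset.Nat.sum_antidiagonal_eq_sum_range_succ_mk] at hco
  simp only [PowerSeries.coeff_mk, coeff_ps_one_sub_pow] at hco
  rw [Nat.choose_eq_zero_of_lt (by omega), Nat.cast_zero, mul_zero] at hco
  have key : ∀ l ∈ Finset.range (i+1),
      (-1:ℤ)^l * ((l+j).choose j) * ((i+j).choose (i-l))
        = (-1)^i * ((((j+l).choose j : ℤ)) * ((-1)^(i-l) * ((i+j).choose (i-l)))) := by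
    intro l hl
    rw [Finset.mem_range] at hl
    have h3 : (-1:ℤ)^i * (-1)^i = 1 := by
      rw [← pow_add, ← two_mul, pow_mul]; norm_num
    rw [neg_one_pow_sub (by omega : l ≤ i), show j + l = l + j by ring]
    rw [show (-1:ℤ)^i * (↑((l+j).choose j) * ((-1:ℤ)^i * (-1:ℤ)^l * ↑((i+j).choose (i-l))))
        = ((-1:ℤ)^i*(-1:ℤ)^i) * ((-1:ℤ)^l * ↑((l+j).choose j) * ↑((i+j).choose (i-l))) from by ring,
      h3, one_mul]
  rw [Finset.sum_congr rfl key, ← Finset.mul_sum, hco, mul_zero]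

lemma F_one (i j : ℕ) :
    ∑ l ∈ Finset.range (i+1), (-1:ℤ)^l * ((l+j).choose j) * ((i+j+1).choose (i-l)) = 1 := by
  induction i with
  | zero => simp
  | succ i ih =>
      have hsplit : ∀ l ∈ Finset.range (i+1),
          (-1:ℤ)^l * ((l+j).choose j) * ((i+1+j+1).choose (i+1-l))
            = (-1:ℤ)^l * ((l+j).choose j) * ((i+j+1).choose (i-l))
              + (-1:ℤ)^l * ((l+j).choose j) * ((i+1+j).choose (i+1-l)) := by
        intro l hl
        rw [Finset.mem_range] at hl
        have h1 : i + 1 - l = (i - l) + 1 := by omega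
        have h2 : i + 1 + j + 1 = (i + j + 1) + 1 := by ring
        have h3 : i + 1 + j = i + j + 1 := by ring
        rw [h1, h2, h3, Nat.choose_succ_succ']
        push_cast
        ring
      rw [Finset.sum_range_succ, Finset.sum_congr rfl hsplit, Finset.sum_add_distrib, ih]
      have hG := G_zero (i+1) j (by omega)
      rw [Finset.sum_range_succ] at hG
      have h4 : (i + 1 - (i+1)) = 0 := Nat.sub_self _
      rw [h4, Nat.choose_zero_right] at hG ⊢
      linear_combination hG

lemma key_real (i j : ℕ) :
    ∑ l ∈ Finset.range (i+1), (-1:ℝ)^l * (((l+j).choose j : ℕ) : ℝ)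
      * ((((i-l).factorial : ℕ) : ℝ)⁻¹ * ((((l+j+1).factorial : ℕ)) : ℝ)⁻¹)
    = ((((i+j+1).factorial : ℕ)) : ℝ)⁻¹ := by
  have hterm : ∀ l ∈ Finset.range (i+1),
      (-1:ℝ)^l * (((l+j).choose j : ℕ) : ℝ)
        * ((((i-l).factorial : ℕ) : ℝ)⁻¹ * ((((l+j+1).factorial : ℕ)) : ℝ)⁻¹)
      = ((-1:ℝ)^l * (((l+j).choose j : ℕ) : ℝ) * (((i+j+1).choose (i-l) : ℕ) : ℝ))
          * ((((i+j+1).factorial : ℕ)) : ℝ)⁻¹ := by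
    intro l hl
    rw [Finset.mem_range] at hl
    have hnat : (i+j+1).choose (i-l) * (i-l).factorial * (l+j+1).factorial
        = (i+j+1).factorial := by
      have h := Nat.choose_mul_factorial_mul_factorial
        (show i - l ≤ i + j + 1 by omega)
      rwa [show i + j + 1 - (i - l) = l + j + 1 by omega] at h
    have hcast : ((((i+j+1).choose (i-l) : ℕ)) : ℝ) * (((i-l).factorial : ℕ) : ℝ)
        * ((((l+j+1).factorial : ℕ)) : ℝ) = (((i+j+1).factorial : ℕ) : ℝ) := by
      exact_mod_cast congrArg (Nat.cast (R := ℝ)) hnat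
    have hf1 : (((i-l).factorial : ℕ) : ℝ) ≠ 0 := Nat.cast_ne_zero.2 (Nat.factorial_ne_zero _)
    have hf2 : ((((l+j+1).factorial : ℕ)) : ℝ) ≠ 0 := Nat.cast_ne_zero.2 (Nat.factorial_ne_zero _)
    have hf3 : ((((i+j+1).factorial : ℕ)) : ℝ) ≠ 0 := Nat.cast_ne_zero.2 (Nat.factorial_ne_zero _)
    field_simp
    linear_combination (-(((l+j).choose j : ℕ) : ℝ)) * hcast
  rw [Finset.sum_congr rfl hterm, ← Finset.sum_mul]
  have hF : ∑ l ∈ Finset.range (i+1),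
      ((-1:ℝ)^l * (((l+j).choose j : ℕ) : ℝ) * (((i+j+1).choose (i-l) : ℕ) : ℝ)) = 1 := by
    have := F_one i j
    exact_mod_cast congrArg (fun z : ℤ => (z : ℝ)) this
  rw [hF, one_mul]

lemma choose_le_two_pow (N k : ℕ) : N.choose k ≤ 2 ^ N := by
  by_cases h : k ≤ N
  · calc N.choose k ≤ ∑ m ∈ Finset.range (N+1), N.choose m :=
        Finset.single_le_sum (f := fun m => N.choose m)
          (fun _ _ => Nat.zero_le _) (Finset.mem_range.2 (by omega))
      _ = 2 ^ N := Nat.sum_range_choose N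
  · rw [Nat.choose_eq_zero_of_lt (by omega)]
    exact Nat.zero_le _

lemma inv_factorial_add_le (i j : ℕ) :
    ((Nat.factorial (i + j + 1) : ℝ))⁻¹
      ≤ ((Nat.factorial i : ℝ))⁻¹ * ((Nat.factorial j : ℝ))⁻¹ := by
  have hnat : Nat.factorial i * Nat.factorial j ≤ Nat.factorial (i + j + 1) :=
    le_trans (Nat.le_of_dvd (Nat.factorial_pos _)
      (Nat.factorial_mul_factorial_dvd_factorial_add i j))
      (Nat.factorial_le (by omega))
  rw [← mul_inv]
  refine inv_anti₀ (by positivity) ?_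
  exact_mod_cast hnat

/-! ### Matrix norm estimates -/

variable {n : ℕ}
local notation "M" => Matrix (Fin n) (Fin n) ℝ

lemma norm_one_le : ‖(1 : M)‖ ≤ 1 := by
  rw [Matrix.norm_le_iff zero_le_one]
  intro i j
  by_cases h : i = j <;> simp [Matrix.one_apply, h]

lemma norm_mul_le' (X Y : M) : ‖X * Y‖ ≤ n * ‖X‖ * ‖Y‖ := by
  rcases Nat.eq_zero_or_pos n with h | h
  · subst h
    have : X * Y = 0 := Subsingleton.elim _ _
    simp [this]
  · rw [Matrix.norm_le_iff (by positivity)]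
    intro i j
    calc ‖(X * Y) i j‖ = ‖∑ k, X i k * Y k j‖ := by rw [Matrix.mul_apply]
      _ ≤ ∑ k, ‖X i k * Y k j‖ := norm_sum_le _ _
      _ ≤ ∑ _k : Fin n, ‖X‖ * ‖Y‖ := by
          refine Finset.sum_le_sum fun k _ => ?_
          rw [norm_mul]
          exact mul_le_mul (Matrix.norm_entry_le_entrywise_sup_norm X)
            (Matrix.norm_entry_le_entrywise_sup_norm Y) (norm_nonneg _) (norm_nonneg _)
      _ = n * ‖X‖ * ‖Y‖ := by simp [mul_assoc]

lemma norm_pow_le (X : M) : ∀ m : ℕ, ‖X ^ m‖ ≤ ((n : ℝ) * ‖X‖) ^ m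
  | 0 => by simpa using norm_one_le
  | (m+1) => by
      calc ‖X ^ (m+1)‖ = ‖X * X ^ m‖ := by rw [pow_succ']
        _ ≤ n * ‖X‖ * ‖X ^ m‖ := norm_mul_le' _ _
        _ ≤ n * ‖X‖ * ((n : ℝ) * ‖X‖) ^ m :=
            mul_le_mul_of_nonneg_left (norm_pow_le X m) (by positivity)
        _ = ((n : ℝ) * ‖X‖) ^ (m+1) := by ring

noncomputable def TT (A B : M) (i j : ℕ) : M := A ^ i * B * A ^ j

lemma norm_TT_le (A B : M) (i j : ℕ) :
    ‖TT A B i j‖ ≤ ((n:ℝ)^2 * ‖B‖) * ((n:ℝ) * ‖A‖)^i * ((n:ℝ) * ‖A‖)^j := by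
  calc ‖A ^ i * B * A ^ j‖ ≤ n * ‖A ^ i * B‖ * ‖A ^ j‖ := norm_mul_le' _ _
    _ ≤ n * (n * ‖A ^ i‖ * ‖B‖) * ‖A ^ j‖ := by
        have := norm_mul_le' (A ^ i) B
        gcongr
    _ ≤ n * (n * ((n:ℝ) * ‖A‖)^i * ‖B‖) * ((n:ℝ) * ‖A‖)^j := by
        have h1 := norm_pow_le A i
        have h2 := norm_pow_le A j
        gcongr <;> positivity
    _ = ((n:ℝ)^2 * ‖B‖) * ((n:ℝ) * ‖A‖)^i * ((n:ℝ) * ‖A‖)^j := by ring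

/-! ### Derivative of products and powers -/

noncomputable def mulB : M →L[ℝ] M →L[ℝ] M :=
  LinearMap.toContinuousLinearMap
  { toFun := fun X => LinearMap.toContinuousLinearMap (LinearMap.mulLeft ℝ X)
    map_add' := fun X Y => by ext Z; simp [add_mul]
    map_smul' := fun c X => by ext Z; simp [smul_mul_assoc] }

lemma hasDerivAt_mul {f g : ℝ → M} {f' g' : M} {t : ℝ}
    (hf : HasDerivAt f f' t) (hg : HasDerivAt g g' t) :
    HasDerivAt (fun s => f s * g s) (f' * g t + f t * g') t := by
  have hb : IsBoundedBilinearMap ℝ (fun p : M × M => p.1 * p.2) :=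
    (mulB (n := n)).isBoundedBilinearMap
  have := (hb.hasFDerivAt (f t, g t)).comp_hasDerivAt t (hf.prodMk hg)
  rw [show f' * g t + f t * g' = hb.deriv (f t, g t) (f', g') by simp [IsBoundedBilinearMap.deriv_apply, add_comm]]
  exact this

lemma hasDerivAt_pow_aff (A B : M) (m : ℕ) (t : ℝ) :
    HasDerivAt (fun s : ℝ => (A + s • B) ^ m)
      (∑ i ∈ Finset.range m, (A + t • B) ^ i * B * (A + t • B) ^ (m - 1 - i)) t := by
  induction m with
  | zero => simp only [pow_zero, Finset.range_zero, Finset.sum_empty]; exact hasDerivAt_const t (1 : M)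
  | succ m ih =>
      have hlin : HasDerivAt (fun s : ℝ => A + s • B) B t := by
        have := ((hasDerivAt_id t).smul_const B).const_add A; simp only [id, one_smul] at this; exact this
      have h := hasDerivAt_mul hlin ih
      have heq : (fun s : ℝ => (A + s • B) * (A + s • B) ^ m)
          = fun s : ℝ => (A + s • B) ^ (m + 1) := by
        funext s; rw [← pow_succ']
      rw [heq] at h
      convert h using 1
      rw [Finset.sum_range_succ']
      rw [add_comm]
      congr 1
      · simp
      · rw [Finset.mul_sum]
        refine Finset.sum_congr rfl fun i hi => ?_
        rw [Finset.mem_range] at hi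
        have h1 : m + 1 - 1 - (i + 1) = m - 1 - i := by omega
        rw [h1, ← mul_assoc, ← mul_assoc, ← pow_succ']

/-! ### The iterated adjoint -/

lemma ad_pow (A B : M) (k : ℕ) :
    (fun X => A * X - X * A)^[k] B
      = ∑ m ∈ Finset.range (k+1),
          ((-1:ℝ)^(k-m) * ((k.choose m : ℕ) : ℝ)) • (A ^ m * B * A ^ (k-m)) := by
  have hfun : (fun X : M => A * X - X * A)
      = ⇑(LinearMap.mulLeft ℝ A - LinearMap.mulRight ℝ A) := by
    funext X; simp
  have hiter : (fun X : M => A * X - X * A)^[k] B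
      = ((LinearMap.mulLeft ℝ A - LinearMap.mulRight ℝ A) ^ k) B := by
    rw [hfun, Module.End.pow_apply]
  rw [hiter, sub_eq_add_neg,
    Commute.add_pow ((LinearMap.commute_mulLeft_right (R := ℝ) A A).neg_right) k]
  rw [LinearMap.sum_apply]
  refine Finset.sum_congr rfl fun m hm => ?_
  have h1 : (-(LinearMap.mulRight ℝ A)) ^ (k - m)
      = ((-1 : ℝ) ^ (k - m)) • (LinearMap.mulRight ℝ (A ^ (k - m))) := by
    rw [← neg_one_smul ℝ (LinearMap.mulRight ℝ A), smul_pow, LinearMap.pow_mulRight]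
  rw [LinearMap.pow_mulLeft, h1]
  simp only [Module.End.mul_apply, Module.End.natCast_apply, LinearMap.smul_apply,
    LinearMap.mulLeft_apply, LinearMap.mulRight_apply]
  rw [← Nat.cast_smul_eq_nsmul ℝ (k.choose m) B]
  simp only [mul_smul_comm, smul_mul_assoc, smul_smul, mul_assoc]

/-! ### Summability helpers -/

lemma hasSum_antidiagonal_group {f : ℕ × ℕ → M} {a : M} (hf : HasSum f a) :
    HasSum (fun m => ∑ x ∈ Finset.HasAntidiagonal.antidiagonal m, f x) a := by
  have h1 : HasSum (f ∘ (Finset.HasAntidiagonal.sigmaAntidiagonalEquivProd (A := ℕ))) a :=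
    (Equiv.hasSum_iff _).mpr hf
  refine HasSum.sigma h1 fun m => ?_
  have := hasSum_fintype (fun c : (Finset.HasAntidiagonal.antidiagonal m : Finset (ℕ × ℕ)) => f c)
  rwa [Finset.sum_coe_sort (Finset.HasAntidiagonal.antidiagonal m) f] at this

lemma summable_pair (C r₁ r₂ : ℝ) (hC : 0 ≤ C) (h1 : 0 ≤ r₁) (h2 : 0 ≤ r₂) :
    Summable (fun x : ℕ × ℕ =>
      (C * r₁ ^ x.1 / Nat.factorial x.1) * (r₂ ^ x.2 / Nat.factorial x.2)) :=
  Summable.mul_of_nonneg (f := fun m : ℕ => C * r₁ ^ m / Nat.factorial m)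
    (g := fun m : ℕ => r₂ ^ m / Nat.factorial m)
    (((Real.summable_pow_div_factorial r₁).mul_left C).congr (fun m => by ring))
    (Real.summable_pow_div_factorial r₂) (fun m => by positivity) (fun m => by positivity)

lemma summable_triple (C r₁ r₂ r₃ : ℝ) (hC : 0 ≤ C) (h1 : 0 ≤ r₁) (h2 : 0 ≤ r₂) (h3 : 0 ≤ r₃) :
    Summable (fun q : ℕ × ℕ × ℕ =>
      (C * r₁ ^ q.1 / Nat.factorial q.1)
        * ((r₂ ^ q.2.1 / Nat.factorial q.2.1) * (r₃ ^ q.2.2 / Nat.factorial q.2.2))) := by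
  have hs1 : Summable (fun p : ℕ => C * r₁ ^ p / Nat.factorial p) :=
    ((Real.summable_pow_div_factorial r₁).mul_left C).congr (fun m => by ring)
  have hs2 : Summable (fun x : ℕ × ℕ =>
      (r₂ ^ x.1 / Nat.factorial x.1) * (r₃ ^ x.2 / Nat.factorial x.2)) :=
    Summable.mul_of_nonneg (f := fun m : ℕ => r₂ ^ m / Nat.factorial m)
      (g := fun m : ℕ => r₃ ^ m / Nat.factorial m)
      (Real.summable_pow_div_factorial r₂)
      (Real.summable_pow_div_factorial r₃) (fun m => by positivity) (fun m => by positivity)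
  exact hs1.mul_of_nonneg (g := fun x : ℕ × ℕ =>
      (r₂ ^ x.1 / Nat.factorial x.1) * (r₃ ^ x.2 / Nat.factorial x.2)) hs2
    (fun p => by positivity) (fun x => by positivity)

noncomputable def gam (j p l : ℕ) : ℝ :=
  (-1:ℝ)^l * (((l+j).choose j : ℕ) : ℝ)
    * ((Nat.factorial p : ℝ)⁻¹ * ((Nat.factorial (l+j+1) : ℝ))⁻¹)

noncomputable def EE (A B : M) (q : ℕ × ℕ × ℕ) : M :=
  gam q.1 q.2.1 q.2.2 • TT A B (q.2.1 + q.2.2) q.1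

lemma norm_EE_le (A B : M) (q : ℕ × ℕ × ℕ) :
    ‖EE A B q‖ ≤ (((n:ℝ)^2 * ‖B‖) * (2 * ((n:ℝ) * ‖A‖)) ^ q.1 / Nat.factorial q.1)
      * ((((n:ℝ) * ‖A‖) ^ q.2.1 / Nat.factorial q.2.1)
        * ((2 * ((n:ℝ) * ‖A‖)) ^ q.2.2 / Nat.factorial q.2.2)) := by
  obtain ⟨j, p, l⟩ := q
  set r := (n:ℝ) * ‖A‖ with hr
  have hr0 : 0 ≤ r := by positivity
  have habs : |gam j p l| = (((l+j).choose j : ℕ) : ℝ)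
      * ((Nat.factorial p : ℝ)⁻¹ * ((Nat.factorial (l+j+1) : ℝ))⁻¹) := by
    rw [gam, abs_mul, abs_mul, abs_pow, abs_neg, abs_one, one_pow, one_mul]
    rw [abs_of_nonneg (by positivity), abs_of_nonneg (by positivity)]
  calc ‖EE A B (j,p,l)‖ = |gam j p l| * ‖TT A B (p+l) j‖ := by
        rw [EE, norm_smul, Real.norm_eq_abs]
    _ ≤ ((((l+j).choose j : ℕ) : ℝ)
          * ((Nat.factorial p : ℝ)⁻¹ * ((Nat.factorial (l+j+1) : ℝ))⁻¹))
        * (((n:ℝ)^2 * ‖B‖) * r^(p+l) * r^j) := by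
        rw [habs]
        exact mul_le_mul_of_nonneg_left (norm_TT_le A B (p+l) j) (by positivity)
    _ ≤ ((2:ℝ)^(l+j) * ((Nat.factorial p : ℝ)⁻¹
          * ((Nat.factorial l : ℝ)⁻¹ * (Nat.factorial j : ℝ)⁻¹)))
        * (((n:ℝ)^2 * ‖B‖) * r^(p+l) * r^j) := by
        have hc : (((l+j).choose j : ℕ) : ℝ) ≤ (2:ℝ)^(l+j) := by
          exact_mod_cast choose_le_two_pow (l+j) j
        have hf := inv_factorial_add_le l j
        gcongr <;> positivity
    _ = (((n:ℝ)^2 * ‖B‖) * (2 * r) ^ j / Nat.factorial j)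
        * ((r ^ p / Nat.factorial p) * ((2 * r) ^ l / Nat.factorial l)) := by
        rw [pow_add 2 l j, pow_add r p l, mul_pow 2 r j, mul_pow 2 r l]
        field_simp

end MED

namespace MED
variable {n : ℕ}

lemma norm_pow_mul_pow_le (X Y : Matrix (Fin n) (Fin n) ℝ) (i j : ℕ) :
    ‖X ^ i * Y * X ^ j‖ ≤ ((n:ℝ)^2 * ‖Y‖) * ((n:ℝ) * ‖X‖)^i * ((n:ℝ) * ‖X‖)^j := by
  calc ‖X ^ i * Y * X ^ j‖ ≤ n * ‖X ^ i * Y‖ * ‖X ^ j‖ := norm_mul_le' _ _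
    _ ≤ n * (n * ‖X ^ i‖ * ‖Y‖) * ‖X ^ j‖ := by
        have := norm_mul_le' (X ^ i) Y
        gcongr
    _ ≤ n * (n * ((n:ℝ) * ‖X‖)^i * ‖Y‖) * ((n:ℝ) * ‖X‖)^j := by
        have h1 := norm_pow_le X i
        have h2 := norm_pow_le X j
        gcongr <;> positivity
    _ = ((n:ℝ)^2 * ‖Y‖) * ((n:ℝ) * ‖X‖)^i * ((n:ℝ) * ‖X‖)^j := by ring

def permE : (ℕ × ℕ × ℕ) ≃ (ℕ × ℕ × ℕ) :=
  ⟨fun x => (x.2.2, x.1, x.2.1), fun y => (y.2.1, y.2.2, y.1), fun _ => rfl, fun _ => rfl⟩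

end MED

set_option maxHeartbeats 4000000 in
open MED in
theorem matrix_exp_deriv_eq_exp_mul_tsum_ad
    (n : ℕ) (hn : 1 ≤ n) (A B : Matrix (Fin n) (Fin n) ℝ) :
    Summable (fun k : ℕ => ((-1 : ℝ) ^ k / (Nat.factorial (k + 1) : ℝ)) •
        ((fun X => A * X - X * A)^[k] B)) ∧
    HasDerivAt (fun t : ℝ => NormedSpace.exp (A + t • B))
      (NormedSpace.exp A *
        ∑' k : ℕ, ((-1 : ℝ) ^ k / (Nat.factorial (k + 1) : ℝ)) •
          ((fun X => A * X - X * A)^[k] B)) 0 := by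
  classical
  have hr0 : (0:ℝ) ≤ (n:ℝ) * ‖A‖ := by positivity
  have hK0 : (0:ℝ) ≤ (n:ℝ)^2 * ‖B‖ := by positivity
  -- the master triple sum
  have hE : Summable (EE A B) :=
    Summable.of_norm_bounded
      (summable_triple ((n:ℝ)^2 * ‖B‖) (2 * ((n:ℝ) * ‖A‖)) ((n:ℝ) * ‖A‖) (2 * ((n:ℝ) * ‖A‖))
        hK0 (by positivity) hr0 (by positivity)) (norm_EE_le A B)
  set v := ∑' q, EE A B q with hvdef
  have hEj : ∀ j : ℕ, Summable (fun pl : ℕ × ℕ => EE A B (j, pl)) := fun j => hE.prod_factor j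
  have hgroup1 : HasSum (fun j => ∑' pl : ℕ × ℕ, EE A B (j, pl)) v :=
    hE.hasSum.prod_fiberwise (fun j => (hEj j).hasSum)
  have h2 : ∀ j : ℕ, HasSum (fun i => ∑ x ∈ Finset.HasAntidiagonal.antidiagonal i, EE A B (j, x))
      (∑' pl : ℕ × ℕ, EE A B (j, pl)) := fun j => hasSum_antidiagonal_group (hEj j).hasSum
  -- compute the diagonal fibers
  have hfib1 : ∀ j i : ℕ, ∑ x ∈ Finset.HasAntidiagonal.antidiagonal i, EE A B (j, x)
      = ((Nat.factorial (i + j + 1) : ℝ))⁻¹ • TT A B i j := by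
    intro j i
    rw [Finset.Nat.sum_antidiagonal_eq_sum_range_succ_mk]
    have hterm : ∀ a ∈ Finset.range (i+1),
        EE A B (j, a, i - a)
          = ((-1:ℝ)^(i-a) * (((i-a+j).choose j : ℕ) : ℝ)
              * (((Nat.factorial a : ℕ) : ℝ)⁻¹
                 * ((Nat.factorial (i-a+j+1) : ℕ) : ℝ)⁻¹)) • TT A B i j := by
      intro a ha
      rw [Finset.mem_range] at ha
      rw [EE, gam, show a + (i - a) = i by omega]
    rw [Finset.sum_congr rfl hterm, ← Finset.sum_smul]
    congr 1
    have hrefl := Finset.sum_range_reflect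
      (fun l => (-1:ℝ)^l * (((l+j).choose j : ℕ) : ℝ)
        * ((((i-l).factorial : ℕ) : ℝ)⁻¹ * ((((l+j+1).factorial : ℕ)) : ℝ)⁻¹)) (i+1)
    rw [key_real i j] at hrefl
    refine Eq.trans ?_ hrefl
    refine Finset.sum_congr rfl fun a ha => ?_
    rw [Finset.mem_range] at ha
    rw [show i + 1 - 1 - a = i - a by omega, show i - (i - a) = a by omega]
  -- summability of the double sum g
  have hgsummable : Summable (fun ji : ℕ × ℕ =>
      ((Nat.factorial (ji.2 + ji.1 + 1) : ℝ))⁻¹ • TT A B ji.2 ji.1) := by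
    refine Summable.of_norm_bounded
      (summable_pair ((n:ℝ)^2 * ‖B‖) ((n:ℝ) * ‖A‖) ((n:ℝ) * ‖A‖) hK0 hr0 hr0) ?_
    rintro ⟨j, i⟩
    calc ‖((Nat.factorial (i + j + 1) : ℝ))⁻¹ • TT A B i j‖
        = ((Nat.factorial (i + j + 1) : ℝ))⁻¹ * ‖TT A B i j‖ := by
          rw [norm_smul, Real.norm_eq_abs, abs_of_nonneg (by positivity)]
      _ ≤ ((Nat.factorial i : ℝ)⁻¹ * (Nat.factorial j : ℝ)⁻¹)
          * (((n:ℝ)^2 * ‖B‖) * ((n:ℝ) * ‖A‖)^i * ((n:ℝ) * ‖A‖)^j) :=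
          mul_le_mul (inv_factorial_add_le i j) (norm_TT_le A B i j) (norm_nonneg _)
            (by positivity)
      _ = (((n:ℝ)^2 * ‖B‖) * ((n:ℝ) * ‖A‖) ^ j / Nat.factorial j)
          * (((n:ℝ) * ‖A‖) ^ i / Nat.factorial i) := by
          rw [div_eq_mul_inv, div_eq_mul_inv]; ring
  have hg2 : ∀ j : ℕ, HasSum (fun i => ((Nat.factorial (i + j + 1) : ℝ))⁻¹ • TT A B i j)
      (∑' pl : ℕ × ℕ, EE A B (j, pl)) := by
    intro j
    have hfe : (fun i => ∑ x ∈ Finset.HasAntidiagonal.antidiagonal i, EE A B (j, x))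
        = fun i => ((Nat.factorial (i + j + 1) : ℝ))⁻¹ • TT A B i j := funext fun i => hfib1 j i
    rw [← hfe]
    exact h2 j
  have htsum_g : ∑' ji : ℕ × ℕ, ((Nat.factorial (ji.2 + ji.1 + 1) : ℝ))⁻¹ • TT A B ji.2 ji.1
      = v := by
    rw [Summable.tsum_prod' hgsummable (fun b => hgsummable.prod_factor b)]
    calc ∑' j, ∑' i, ((Nat.factorial (i + j + 1) : ℝ))⁻¹ • TT A B i j
        = ∑' j, ∑' pl : ℕ × ℕ, EE A B (j, pl) := tsum_congr fun j => (hg2 j).tsum_eq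
      _ = v := hgroup1.tsum_eq
  have hgv : HasSum (fun ji : ℕ × ℕ =>
      ((Nat.factorial (ji.2 + ji.1 + 1) : ℝ))⁻¹ • TT A B ji.2 ji.1) v :=
    htsum_g ▸ hgsummable.hasSum
  -- group along total degree for the LHS
  have hL : HasSum (fun m => ∑ x ∈ Finset.HasAntidiagonal.antidiagonal m,
      ((Nat.factorial (x.2 + x.1 + 1) : ℝ))⁻¹ • TT A B x.2 x.1) v :=
    hasSum_antidiagonal_group hgv
  have hfib2 : ∀ m : ℕ, ∑ x ∈ Finset.HasAntidiagonal.antidiagonal m,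
      ((Nat.factorial (x.2 + x.1 + 1) : ℝ))⁻¹ • TT A B x.2 x.1
      = (Nat.factorial (m+1) : ℝ)⁻¹ • ∑ i ∈ Finset.range (m+1), A^i * B * A^(m+1-1-i) := by
    intro m
    rw [Finset.Nat.sum_antidiagonal_eq_sum_range_succ_mk]
    have hterm : ∀ a ∈ Finset.range (m+1),
        ((Nat.factorial (m - a + a + 1) : ℝ))⁻¹ • TT A B (m - a) a
          = (Nat.factorial (m+1) : ℝ)⁻¹ • TT A B (m-a) a := by
      intro a ha
      rw [Finset.mem_range] at ha
      rw [show m - a + a + 1 = m + 1 by omega]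
    rw [Finset.sum_congr rfl hterm, ← Finset.smul_sum]
    congr 1
    calc ∑ a ∈ Finset.range (m+1), TT A B (m-a) a
        = ∑ a ∈ Finset.range (m+1), TT A B (m+1-1-a) (m - (m+1-1-a)) := by
          refine Finset.sum_congr rfl fun a ha => ?_
          rw [Finset.mem_range] at ha
          rw [show m+1-1-a = m - a by omega, show m - (m-a) = a by omega]
      _ = ∑ a ∈ Finset.range (m+1), TT A B a (m-a) :=
          Finset.sum_range_reflect (fun a => TT A B a (m - a)) (m+1)
      _ = ∑ i ∈ Finset.range (m+1), A^i * B * A^(m+1-1-i) := by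
          refine Finset.sum_congr rfl fun i hi => ?_
          rw [Finset.mem_range] at hi
          rw [TT, show m+1-1-i = m-i by omega]
  have hψ : HasSum (fun m : ℕ => (Nat.factorial m : ℝ)⁻¹
      • ∑ i ∈ Finset.range m, A^i * B * A^(m-1-i)) v := by
    have h5 : HasSum (fun m : ℕ => (Nat.factorial (m+1) : ℝ)⁻¹
        • ∑ i ∈ Finset.range (m+1), A^i * B * A^(m+1-1-i)) v := by
      have hfe := funext hfib2
      rw [← hfe]
      exact hL
    refine (hasSum_nat_add_iff' 1).mp ?_
    simpa using h5
  -- the series s over pairs, summing to the adjoint series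
  have hssum : Summable (fun lj : ℕ × ℕ =>
      ((-1:ℝ)^lj.1 * (((lj.1+lj.2).choose lj.2 : ℕ) : ℝ)
        * ((Nat.factorial (lj.1+lj.2+1) : ℝ))⁻¹) • TT A B lj.1 lj.2) := by
    refine Summable.of_norm_bounded
      (summable_pair ((n:ℝ)^2 * ‖B‖) (2 * ((n:ℝ) * ‖A‖)) (2 * ((n:ℝ) * ‖A‖)) hK0
        (by positivity) (by positivity)) ?_
    rintro ⟨l, j⟩
    have habs : |(-1:ℝ)^l * (((l+j).choose j : ℕ) : ℝ) * ((Nat.factorial (l+j+1) : ℝ))⁻¹|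
        = (((l+j).choose j : ℕ) : ℝ) * ((Nat.factorial (l+j+1) : ℝ))⁻¹ := by
      rw [abs_mul, abs_mul, abs_pow, abs_neg, abs_one, one_pow, one_mul,
        abs_of_nonneg (by positivity), abs_of_nonneg (by positivity)]
    calc ‖((-1:ℝ)^l * (((l+j).choose j : ℕ) : ℝ)
          * ((Nat.factorial (l+j+1) : ℝ))⁻¹) • TT A B l j‖
        = ((((l+j).choose j : ℕ) : ℝ) * ((Nat.factorial (l+j+1) : ℝ))⁻¹) * ‖TT A B l j‖ := by
          rw [norm_smul, Real.norm_eq_abs, habs]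
      _ ≤ ((2:ℝ)^(l+j) * ((Nat.factorial l : ℝ)⁻¹ * (Nat.factorial j : ℝ)⁻¹))
          * (((n:ℝ)^2 * ‖B‖) * ((n:ℝ) * ‖A‖)^l * ((n:ℝ) * ‖A‖)^j) := by
          have hc : (((l+j).choose j : ℕ) : ℝ) ≤ (2:ℝ)^(l+j) := by
            exact_mod_cast choose_le_two_pow (l+j) j
          exact mul_le_mul (mul_le_mul hc (inv_factorial_add_le l j) (by positivity)
              (by positivity)) (norm_TT_le A B l j) (norm_nonneg _) (by positivity)
      _ = (((n:ℝ)^2 * ‖B‖) * (2 * ((n:ℝ) * ‖A‖)) ^ l / Nat.factorial l)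
          * ((2 * ((n:ℝ) * ‖A‖)) ^ j / Nat.factorial j) := by
          rw [pow_add 2 l j, mul_pow 2 ((n:ℝ) * ‖A‖) l, mul_pow 2 ((n:ℝ) * ‖A‖) j,
            div_eq_mul_inv, div_eq_mul_inv]
          ring
  have hadk : HasSum (fun k : ℕ => ((-1 : ℝ) ^ k / (Nat.factorial (k + 1) : ℝ)) •
      ((fun X => A * X - X * A)^[k] B))
      (∑' lj : ℕ × ℕ, ((-1:ℝ)^lj.1 * (((lj.1+lj.2).choose lj.2 : ℕ) : ℝ)
        * ((Nat.factorial (lj.1+lj.2+1) : ℝ))⁻¹) • TT A B lj.1 lj.2) := by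
    have h6 := hasSum_antidiagonal_group hssum.hasSum
    have hfe : ∀ k : ℕ, (∑ x ∈ Finset.HasAntidiagonal.antidiagonal k,
        ((-1:ℝ)^x.1 * (((x.1+x.2).choose x.2 : ℕ) : ℝ)
          * ((Nat.factorial (x.1+x.2+1) : ℝ))⁻¹) • TT A B x.1 x.2)
        = ((-1 : ℝ) ^ k / (Nat.factorial (k + 1) : ℝ)) • ((fun X => A * X - X * A)^[k] B) := by
      intro k
      rw [Finset.Nat.sum_antidiagonal_eq_sum_range_succ_mk, ad_pow, Finset.smul_sum]
      refine Finset.sum_congr rfl fun m hm => ?_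
      rw [Finset.mem_range] at hm
      rw [smul_smul]
      have hTT : TT A B m (k - m) = A ^ m * B * A ^ (k - m) := rfl
      rw [hTT]
      congr 1
      have hmk : m + (k - m) = k := by omega
      rw [hmk]
      rw [Nat.choose_symm (by omega : m ≤ k)]
      have hkk : (-1:ℝ)^k * (-1)^k = 1 := by
        rw [← pow_add, ← two_mul, pow_mul]; norm_num
      rw [neg_one_pow_sub_real (by omega : m ≤ k), div_eq_mul_inv]
      linear_combination (-((-1:ℝ)^m * ((k.choose m : ℕ) : ℝ)
        * ((Nat.factorial (k+1) : ℝ))⁻¹)) * hkk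
    rw [← funext hfe]
    exact h6
  refine ⟨hadk.summable, ?_⟩
  -- exp A as a series
  have hexp_small : Summable (fun p : ℕ => (Nat.factorial p : ℝ)⁻¹ • A ^ p) := by
    refine Summable.of_norm_bounded (Real.summable_pow_div_factorial ((n:ℝ) * ‖A‖)) ?_
    intro p
    rw [norm_smul, Real.norm_eq_abs, abs_of_nonneg (by positivity)]
    calc (Nat.factorial p:ℝ)⁻¹ * ‖A^p‖ ≤ (Nat.factorial p:ℝ)⁻¹ * ((n:ℝ) * ‖A‖)^p :=
          mul_le_mul_of_nonneg_left (norm_pow_le A p) (by positivity)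
      _ = ((n:ℝ) * ‖A‖)^p / Nat.factorial p := by rw [div_eq_mul_inv]; ring
  -- exp A * (∑' s) = v
  have hexpAS : NormedSpace.exp A
      * (∑' lj : ℕ × ℕ, ((-1:ℝ)^lj.1 * (((lj.1+lj.2).choose lj.2 : ℕ) : ℝ)
        * ((Nat.factorial (lj.1+lj.2+1) : ℝ))⁻¹) • TT A B lj.1 lj.2) = v := by
    set S' := ∑' lj : ℕ × ℕ, ((-1:ℝ)^lj.1 * (((lj.1+lj.2).choose lj.2 : ℕ) : ℝ)
        * ((Nat.factorial (lj.1+lj.2+1) : ℝ))⁻¹) • TT A B lj.1 lj.2 with hS'def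
    have hexpA : NormedSpace.exp A = ∑' p : ℕ, (Nat.factorial p : ℝ)⁻¹ • A ^ p := by
      rw [NormedSpace.exp_eq_tsum ℝ]
    have hmulR : (∑' p : ℕ, (Nat.factorial p : ℝ)⁻¹ • A ^ p) * S'
        = ∑' p : ℕ, ((Nat.factorial p : ℝ)⁻¹ • A ^ p) * S' := by
      have := ContinuousLinearMap.map_tsum
        (LinearMap.toContinuousLinearMap (LinearMap.mulRight ℝ S')) hexp_small
      simpa using this
    have hmulL : ∀ p : ℕ, ((Nat.factorial p : ℝ)⁻¹ • A ^ p) * S'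
        = ∑' lj : ℕ × ℕ, ((Nat.factorial p : ℝ)⁻¹ • A ^ p)
            * (((-1:ℝ)^lj.1 * (((lj.1+lj.2).choose lj.2 : ℕ) : ℝ)
              * ((Nat.factorial (lj.1+lj.2+1) : ℝ))⁻¹) • TT A B lj.1 lj.2) := by
      intro p
      have := ContinuousLinearMap.map_tsum
        (LinearMap.toContinuousLinearMap
          (LinearMap.mulLeft ℝ ((Nat.factorial p : ℝ)⁻¹ • A ^ p))) hssum
      simpa using this
    have hterm3 : ∀ (p : ℕ) (lj : ℕ × ℕ),
        ((Nat.factorial p : ℝ)⁻¹ • A ^ p)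
            * (((-1:ℝ)^lj.1 * (((lj.1+lj.2).choose lj.2 : ℕ) : ℝ)
              * ((Nat.factorial (lj.1+lj.2+1) : ℝ))⁻¹) • TT A B lj.1 lj.2)
          = EE A B (permE (p, lj.1, lj.2)) := by
      rintro p ⟨l, j⟩
      show _ = EE A B (j, p, l)
      rw [smul_mul_assoc, mul_smul_comm, smul_smul, EE, gam]
      congr 1
      · simp only
        ring
      · show A ^ p * (TT A B l j) = TT A B (p + l) j
        rw [TT, TT, ← mul_assoc, ← mul_assoc, ← pow_add]
    have hEperm : Summable (fun x : ℕ × ℕ × ℕ => EE A B (permE x)) :=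
      (Equiv.summable_iff permE).mpr hE
    calc NormedSpace.exp A * S'
        = ∑' p : ℕ, ((Nat.factorial p : ℝ)⁻¹ • A ^ p) * S' := by rw [hexpA, hmulR]
      _ = ∑' p : ℕ, ∑' lj : ℕ × ℕ, ((Nat.factorial p : ℝ)⁻¹ • A ^ p)
            * (((-1:ℝ)^lj.1 * (((lj.1+lj.2).choose lj.2 : ℕ) : ℝ)
              * ((Nat.factorial (lj.1+lj.2+1) : ℝ))⁻¹) • TT A B lj.1 lj.2) :=
          tsum_congr hmulL
      _ = ∑' p : ℕ, ∑' lj : ℕ × ℕ, EE A B (permE (p, lj.1, lj.2)) := by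
          exact tsum_congr fun p => tsum_congr fun lj => hterm3 p lj
      _ = ∑' x : ℕ × ℕ × ℕ, EE A B (permE x) := (Summable.tsum_prod' hEperm (fun b => hEperm.prod_factor b)).symm
      _ = v := permE.tsum_eq (EE A B)
  -- the derivative
  have hρ1 : (1:ℝ) ≤ max 1 ((n:ℝ) * (‖A‖ + ‖B‖)) := le_max_left _ _
  have hρ0 : (0:ℝ) ≤ max 1 ((n:ℝ) * (‖A‖ + ‖B‖)) := le_trans zero_le_one hρ1
  have hu : Summable (fun m : ℕ => ((n:ℝ)^2 * ‖B‖)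
      * (2 * max 1 ((n:ℝ) * (‖A‖ + ‖B‖)))^m / Nat.factorial m) :=
    ((Real.summable_pow_div_factorial (2 * max 1 ((n:ℝ) * (‖A‖ + ‖B‖)))).mul_left
      ((n:ℝ)^2 * ‖B‖)).congr (fun m => by ring)
  have hder : ∀ (m : ℕ) (t : ℝ), t ∈ Metric.ball (0:ℝ) 1 →
      HasDerivAt (fun t : ℝ => (Nat.factorial m : ℝ)⁻¹ • (A + t • B) ^ m)
        ((Nat.factorial m : ℝ)⁻¹
          • ∑ i ∈ Finset.range m, (A + t • B)^i * B * (A + t • B)^(m-1-i)) t :=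
    fun m t _ => (hasDerivAt_pow_aff A B m t).const_smul ((Nat.factorial m : ℝ)⁻¹)
  have hbound : ∀ (m : ℕ) (t : ℝ), t ∈ Metric.ball (0:ℝ) 1 →
      ‖(Nat.factorial m : ℝ)⁻¹
          • ∑ i ∈ Finset.range m, (A + t • B)^i * B * (A + t • B)^(m-1-i)‖
        ≤ ((n:ℝ)^2 * ‖B‖) * (2 * max 1 ((n:ℝ) * (‖A‖ + ‖B‖)))^m / Nat.factorial m := by
    intro m t ht
    have ht1 : |t| ≤ 1 := by
      rw [Metric.mem_ball, Real.dist_eq, sub_zero] at ht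
      exact ht.le
    have hX : ‖A + t • B‖ ≤ ‖A‖ + ‖B‖ := by
      refine le_trans (norm_add_le _ _) ?_
      have h7 : ‖t • B‖ ≤ ‖B‖ := by
        rw [norm_smul, Real.norm_eq_abs]
        nlinarith [norm_nonneg B]
      linarith
    have hXr : (n:ℝ) * ‖A + t • B‖ ≤ max 1 ((n:ℝ) * (‖A‖ + ‖B‖)) := by
      refine le_trans ?_ (le_max_right _ _)
      have : (0:ℝ) ≤ (n:ℝ) := by positivity
      nlinarith
    have hterm : ∀ i ∈ Finset.range m,
        ‖(A + t • B)^i * B * (A + t • B)^(m-1-i)‖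
          ≤ ((n:ℝ)^2 * ‖B‖) * (max 1 ((n:ℝ) * (‖A‖ + ‖B‖)))^m := by
      intro i hi
      rw [Finset.mem_range] at hi
      calc ‖(A + t • B)^i * B * (A + t • B)^(m-1-i)‖
          ≤ ((n:ℝ)^2 * ‖B‖) * ((n:ℝ) * ‖A + t • B‖)^i * ((n:ℝ) * ‖A + t • B‖)^(m-1-i) :=
            norm_pow_mul_pow_le (A + t • B) B i (m-1-i)
        _ ≤ ((n:ℝ)^2 * ‖B‖) * (max 1 ((n:ℝ) * (‖A‖ + ‖B‖)))^i
              * (max 1 ((n:ℝ) * (‖A‖ + ‖B‖)))^(m-1-i) := by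
            have h0 : (0:ℝ) ≤ (n:ℝ) * ‖A + t • B‖ := by positivity
            gcongr <;> exact hXr
        _ = ((n:ℝ)^2 * ‖B‖) * (max 1 ((n:ℝ) * (‖A‖ + ‖B‖)))^(i + (m-1-i)) := by
            rw [pow_add, mul_assoc]
        _ ≤ ((n:ℝ)^2 * ‖B‖) * (max 1 ((n:ℝ) * (‖A‖ + ‖B‖)))^m := by
            gcongr
            · omega
    calc ‖(Nat.factorial m : ℝ)⁻¹
          • ∑ i ∈ Finset.range m, (A + t • B)^i * B * (A + t • B)^(m-1-i)‖
        = (Nat.factorial m : ℝ)⁻¹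
            * ‖∑ i ∈ Finset.range m, (A + t • B)^i * B * (A + t • B)^(m-1-i)‖ := by
          rw [norm_smul, Real.norm_eq_abs, abs_of_nonneg (by positivity)]
      _ ≤ (Nat.factorial m : ℝ)⁻¹
            * ((m:ℝ) * (((n:ℝ)^2 * ‖B‖) * (max 1 ((n:ℝ) * (‖A‖ + ‖B‖)))^m)) := by
          refine mul_le_mul_of_nonneg_left ?_ (by positivity)
          refine le_trans (norm_sum_le _ _) ?_
          refine le_trans (Finset.sum_le_sum hterm) ?_
          rw [Finset.sum_const, Finset.card_range, nsmul_eq_mul]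
      _ ≤ (Nat.factorial m : ℝ)⁻¹
            * ((2:ℝ)^m * (((n:ℝ)^2 * ‖B‖) * (max 1 ((n:ℝ) * (‖A‖ + ‖B‖)))^m)) := by
          have h8 : (m:ℝ) ≤ (2:ℝ)^m := by exact_mod_cast (Nat.lt_two_pow_self (n := m)).le
          gcongr
      _ = ((n:ℝ)^2 * ‖B‖) * (2 * max 1 ((n:ℝ) * (‖A‖ + ‖B‖)))^m / Nat.factorial m := by
          rw [mul_pow, div_eq_mul_inv]
          ring
  have hg0 : Summable (fun m : ℕ => (Nat.factorial m : ℝ)⁻¹ • (A + (0:ℝ) • B) ^ m) := by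
    simpa using hexp_small
  have HD := hasDerivAt_tsum_of_isPreconnected hu Metric.isOpen_ball
    (convex_ball (0:ℝ) 1).isPreconnected hder hbound (Metric.mem_ball_self one_pos) hg0
    (Metric.mem_ball_self one_pos)
  have hfuneq : (fun z : ℝ => ∑' m : ℕ, (Nat.factorial m : ℝ)⁻¹ • (A + z • B) ^ m)
      = fun t : ℝ => NormedSpace.exp (A + t • B) := by
    funext z
    rw [NormedSpace.exp_eq_tsum ℝ]
  have hderiv_eq : (∑' m : ℕ, (Nat.factorial m : ℝ)⁻¹
      • ∑ i ∈ Finset.range m, (A + (0:ℝ) • B)^i * B * (A + (0:ℝ) • B)^(m-1-i)) = v := by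
    have h9 : ∀ m : ℕ, (Nat.factorial m : ℝ)⁻¹
        • ∑ i ∈ Finset.range m, (A + (0:ℝ) • B)^i * B * (A + (0:ℝ) • B)^(m-1-i)
        = (Nat.factorial m : ℝ)⁻¹ • ∑ i ∈ Finset.range m, A^i * B * A^(m-1-i) := by
      intro m
      simp
    rw [tsum_congr h9]
    exact hψ.tsum_eq
  have hval : NormedSpace.exp A *
      (∑' k : ℕ, ((-1 : ℝ) ^ k / (Nat.factorial (k + 1) : ℝ)) •
        ((fun X => A * X - X * A)^[k] B))
      = ∑' m : ℕ, (Nat.factorial m : ℝ)⁻¹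
          • ∑ i ∈ Finset.range m, (A + (0:ℝ) • B)^i * B * (A + (0:ℝ) • B)^(m-1-i) := by
    rw [hadk.tsum_eq, hexpAS, hderiv_eq]
  rw [hval, ← hfuneq]
  exact HD
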